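/- Let Z > 0, let J ≥ 1 be a natural number, h = Z/J, and let v : ℝ → ℝ be continuous on [0,Z] and affine on each subinterval [k·h, (k+1)·h], k = 0, …, J−1; that is, there exist reals a_k, b_k with v(x) = a_k + b_k·x for all x ∈ [k·h, (k+1)·h]. Then Σ_{k=0}^{J−1} b_k² · h ≤ (12/h²) · ∫₀^Z v(x)² dx; equivalently, ∫₀^Z v'(x)² dx ≤ 12·(J/Z)² · ∫₀^Z v(x)² dx where v' denotes the piecewise slope. -/

import Mathlib

open MeasureTheory

lemma affine_sq_integral (A B c d : ℝ) :
    ∫ x in c..d, (A + B * x) ^ 2 =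
      A ^ 2 * (d - c) + A * B * (d ^ 2 - c ^ 2) + B ^ 2 * (d ^ 3 - c ^ 3) / 3 := by
  have hderiv : ∀ x ∈ Set.uIcc c d,
      HasDerivAt (fun x => A ^ 2 * x + A * B * x ^ 2 + B ^ 2 * x ^ 3 / 3)
        ((A + B * x) ^ 2) x := by
    intro x _
    have h1 := (((hasDerivAt_id x).const_mul (A ^ 2)).add
        ((hasDerivAt_pow 2 x).const_mul (A * B))).add
        (((hasDerivAt_pow 3 x).const_mul (B ^ 2)).div_const 3)
    refine h1.congr_deriv ?_
    push_cast
    ring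
  have hcont : IntervalIntegrable (fun x => (A + B * x) ^ 2) volume c d := by
    apply Continuous.intervalIntegrable
    continuity
  rw [intervalIntegral.integral_eq_sub_of_hasDerivAt hderiv hcont]
  ring

lemma affine_sq_lower (A B c d : ℝ) (hcd : c ≤ d) :
    B ^ 2 * (d - c) ^ 3 / 12 ≤ ∫ x in c..d, (A + B * x) ^ 2 := by
  rw [affine_sq_integral]
  nlinarith [sq_nonneg (2 * A + B * (c + d)), sub_nonneg.mpr hcd,
    mul_nonneg (sub_nonneg.mpr hcd) (sq_nonneg (2 * A + B * (c + d)))]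

/-- Inverse inequality for continuous piecewise-linear finite element functions
on a uniform partition of `(0,Z)` with `J` elements and mesh size `h = Z/J`:
the L² norm of the piecewise slope is bounded by `(12/h²)` times the L² norm of
the function. -/
theorem fem_inverse_inequality
    (Z : ℝ) (hZ : 0 < Z) (J : ℕ) (hJ : 1 ≤ J)
    (v : ℝ → ℝ) (a b : Fin J → ℝ)
    (hv : ContinuousOn v (Set.Icc 0 Z))
    (haff : ∀ k : Fin J, ∀ x ∈ Set.Icc ((k : ℝ) * (Z / J)) (((k : ℝ) + 1) * (Z / J)),
      v x = a k + b k * x) :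
    ∑ k, b k ^ 2 * (Z / J) ≤
      (12 / (Z / J) ^ 2) * ∫ x in (0:ℝ)..Z, v x ^ 2 := by
  set h : ℝ := Z / J with hh
  have hJ0 : (0 : ℝ) < J := by exact_mod_cast Nat.lt_of_lt_of_le Nat.zero_lt_one hJ
  have hh0 : 0 < h := div_pos hZ hJ0
  -- subinterval endpoints
  set p : ℕ → ℝ := fun k => k * h with hp
  have hmono : ∀ k : ℕ, p k ≤ p (k + 1) := by
    intro k
    simp only [hp]
    push_cast
    nlinarith [hh0.le]
  -- each subinterval is inside [0, Z]
  have hsubset : ∀ k : ℕ, k < J → Set.Icc (p k) (p (k + 1)) ⊆ Set.Icc 0 Z := by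
    intro k hk
    apply Set.Icc_subset_Icc
    · simp only [hp]; positivity
    · simp only [hp]
      push_cast
      have : ((k : ℝ) + 1) ≤ J := by exact_mod_cast hk
      calc ((k : ℝ) + 1) * h ≤ (J : ℝ) * h := by nlinarith [hh0.le]
        _ = Z := by rw [hh]; field_simp [hJ0.ne']
  -- integrability of v^2 on each subinterval
  have hint : ∀ k : ℕ, k < J → IntervalIntegrable (fun x => v x ^ 2) volume (p k) (p (k + 1)) := by
    intro k hk
    apply ContinuousOn.intervalIntegrable
    exact ((hv.mono (hsubset k hk)).pow 2).mono
      (by rw [Set.uIcc_of_le (hmono k)])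
  -- split the integral
  have hsplit : (∑ k ∈ Finset.range J, ∫ x in p k..p (k + 1), v x ^ 2)
      = ∫ x in (0:ℝ)..Z, v x ^ 2 := by
    have hp0 : p 0 = 0 := by simp [hp]
    have hpJ : p J = Z := by
      simp only [hp, hh]
      field_simp
    rw [intervalIntegral.sum_integral_adjacent_intervals hint, hp0, hpJ]
  -- per-element lower bound
  have key : ∀ k : Fin J, b k ^ 2 * h * h ^ 2 / 12 ≤ ∫ x in p k..p (k + 1), v x ^ 2 := by
    intro k
    have hIcc : Set.uIcc (p k) (p (k + 1)) = Set.Icc (p (k : ℕ)) (p ((k : ℕ) + 1)) :=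
      Set.uIcc_of_le (hmono k)
    have hcongr : ∫ x in p k..p (k + 1), v x ^ 2
        = ∫ x in p k..p (k + 1), (a k + b k * x) ^ 2 := by
      apply intervalIntegral.integral_congr
      intro x hx
      rw [hIcc] at hx
      have hx' : x ∈ Set.Icc ((k : ℝ) * h) (((k : ℝ) + 1) * h) := by
        simpa [hp] using hx
      simp [haff k x hx']
    rw [hcongr]
    have := affine_sq_lower (a k) (b k) (p k) (p ((k : ℕ) + 1)) (hmono k)
    have hlen : p ((k : ℕ) + 1) - p (k : ℕ) = h := by
      simp only [hp]; push_cast; ring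
    rw [hlen] at this
    calc b k ^ 2 * h * h ^ 2 / 12 = b k ^ 2 * h ^ 3 / 12 := by ring
      _ ≤ _ := this
  -- combine
  have hsum : ∑ k : Fin J, b k ^ 2 * h * h ^ 2 / 12 ≤ ∫ x in (0:ℝ)..Z, v x ^ 2 := by
    calc ∑ k : Fin J, b k ^ 2 * h * h ^ 2 / 12
        ≤ ∑ k : Fin J, ∫ x in p k..p (k + 1), v x ^ 2 :=
          Finset.sum_le_sum (fun k _ => key k)
      _ = ∑ k ∈ Finset.range J, ∫ x in p k..p (k + 1), v x ^ 2 :=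
          Fin.sum_univ_eq_sum_range (fun k : ℕ => ∫ x in p k..p (k + 1), v x ^ 2) J
      _ = _ := hsplit
  have h2 : (0:ℝ) < h ^ 2 := by positivity
  rw [div_mul_eq_mul_div, le_div_iff₀ h2, Finset.sum_mul]
  calc ∑ k : Fin J, b k ^ 2 * h * h ^ 2
      = 12 * ∑ k : Fin J, b k ^ 2 * h * h ^ 2 / 12 := by
        rw [Finset.mul_sum]; congr 1; ext k; ring
    _ ≤ 12 * ∫ x in (0:ℝ)..Z, v x ^ 2 := by linarith [hsum]
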